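/- Let d ≥ 1, let Σ be the diagonal d×d matrix with diagonal entries s_f > 0, let S be its (diagonal) positive definite square root with entries √(s_f), let μ ∈ ℝ^d, α > 0 and p < 0. If e* minimizes the Euclidean norm ‖e‖₂ over the nonempty feasible set { e ∈ ℝ^d : α ≤ μᵀe + p·‖S e‖₂ }, then there exist λ > 0, k₁ > 0, k₂ > 0 such that for every coordinate f, e*_f = λ·μ_f / (k₁ + k₂·s_f). In particular, the optimal effort in feature f is increasing in the mean contribution μ_f and, for μ_f > 0, decreasing in the uncertainty s_f. -/

import Mathlib

lemma sqrt_add_le' (q h : ℝ) (hq : 0 < q) (hh : 0 ≤ q + h) :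
    Real.sqrt (q + h) ≤ Real.sqrt q + h / (2 * Real.sqrt q) := by
  have hsq : 0 < Real.sqrt q := Real.sqrt_pos.2 hq
  have h1 : Real.sqrt (q + h) ^ 2 = q + h := Real.sq_sqrt hh
  have h2 : Real.sqrt q ^ 2 = q := Real.sq_sqrt hq.le
  have key : 2 * Real.sqrt q * Real.sqrt (q + h) ≤ 2 * q + h := by
    nlinarith [sq_nonneg (Real.sqrt (q+h) - Real.sqrt q)]
  rw [← sub_nonneg]
  have heq : Real.sqrt q + h / (2 * Real.sqrt q) - Real.sqrt (q + h)
      = (2*q + h - 2 * Real.sqrt q * Real.sqrt (q+h)) / (2 * Real.sqrt q) := by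
    field_simp; nlinarith [h2]
  rw [heq]
  apply div_nonneg (by linarith) (by positivity)

lemma le_zero_of_forall' (a C : ℝ) (hC : 0 ≤ C)
    (h : ∀ t : ℝ, 0 < t → t < 1 → a ≤ t * C) : a ≤ 0 := by
  by_contra hpos
  push_neg at hpos
  set t := min (1/2) (a / (2*(C+1))) with ht
  have ht0 : 0 < t := lt_min (by norm_num) (by positivity)
  have ht1 : t < 1 := lt_of_le_of_lt (min_le_left _ _) (by norm_num)
  have h2 := h t ht0 ht1
  have htle : t ≤ a / (2*(C+1)) := min_le_right _ _
  have h3 : a ≤ (a / (2*(C+1))) * C := le_trans h2 (by nlinarith)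
  have hcc : 0 < 2*(C+1) := by linarith
  rw [div_mul_eq_mul_div, le_div_iff₀ hcc] at h3
  nlinarith

set_option maxHeartbeats 1000000 in
theorem stmt_15 (d : ℕ) (hd : 1 ≤ d) (s : Fin d → ℝ) (hs : ∀ f, 0 < s f)
    (μ : Fin d → ℝ) (α : ℝ) (hα : 0 < α) (p : ℝ) (hp : p < 0)
    (estar : Fin d → ℝ)
    (hfeas : α ≤ ∑ f, μ f * estar f + p * Real.sqrt (∑ f,
      ((Matrix.diagonal fun g => Real.sqrt (s g)).mulVec estar f) ^ 2))
    (hopt : ∀ e : Fin d → ℝ,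
      α ≤ ∑ f, μ f * e f + p * Real.sqrt (∑ f,
        ((Matrix.diagonal fun g => Real.sqrt (s g)).mulVec e f) ^ 2) →
      Real.sqrt (∑ f, estar f ^ 2) ≤ Real.sqrt (∑ f, e f ^ 2)) :
    ∃ lam k₁ k₂ : ℝ, 0 < lam ∧ 0 < k₁ ∧ 0 < k₂ ∧
      (∀ f, estar f = lam * μ f / (k₁ + k₂ * s f)) ∧
      (∀ f, ∀ m₁ m₂ : ℝ, m₁ < m₂ →
        lam * m₁ / (k₁ + k₂ * s f) < lam * m₂ / (k₁ + k₂ * s f)) ∧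
      (∀ f, ∀ s₁ s₂ : ℝ, 0 < s₁ → s₁ < s₂ → 0 < μ f →
        lam * μ f / (k₁ + k₂ * s₂) < lam * μ f / (k₁ + k₂ * s₁)) := by
  -- simplify the diagonal mulVec
  have hmv : ∀ e : Fin d → ℝ,
      (∑ f, ((Matrix.diagonal fun g => Real.sqrt (s g)).mulVec e f) ^ 2)
        = ∑ f, s f * e f ^ 2 := by
    intro e
    refine Finset.sum_congr rfl fun f _ => ?_
    rw [Matrix.mulVec_diagonal, mul_pow, Real.sq_sqrt (hs f).le]
  rw [hmv] at hfeas
  replace hopt : ∀ e : Fin d → ℝ,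
      α ≤ ∑ f, μ f * e f + p * Real.sqrt (∑ f, s f * e f ^ 2) →
      Real.sqrt (∑ f, estar f ^ 2) ≤ Real.sqrt (∑ f, e f ^ 2) := fun e he =>
    hopt e (by rw [hmv]; exact he)
  set r2 : ℝ := ∑ f, estar f ^ 2 with hr2def
  set q : ℝ := ∑ f, s f * estar f ^ 2 with hqdef
  have hr2nn : 0 ≤ r2 := hr2def ▸ Finset.sum_nonneg fun f _ => sq_nonneg _
  -- r2 > 0
  have hr2pos : 0 < r2 := by
    rcases hr2nn.lt_or_eq with h | h
    · exact h
    · exfalso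
      have hz : ∀ f, estar f = 0 := by
        intro f
        have h0 := (Finset.sum_eq_zero_iff_of_nonneg
          (fun f _ => sq_nonneg (estar f))).1 (hr2def ▸ h.symm) f (Finset.mem_univ f)
        exact sq_eq_zero_iff.1 h0
      have hq0 : q = 0 := by simp [hqdef, hz]
      have hM0 : (∑ f, μ f * estar f) = 0 := by simp [hz]
      rw [hM0, hq0, Real.sqrt_zero, mul_zero, zero_add] at hfeas
      linarith
  -- q > 0
  have hqpos : 0 < q := by
    have hex : ∃ f, estar f ≠ 0 := by
      by_contra hc
      push_neg at hc
      have : r2 = 0 := by simp [hr2def, hc]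
      linarith
    obtain ⟨f0, hf0⟩ := hex
    have h1 : s f0 * estar f0 ^ 2 ≤ q :=
      hqdef ▸ Finset.single_le_sum (fun g _ => mul_nonneg (hs g).le (sq_nonneg _))
        (Finset.mem_univ f0)
    have h2 : 0 < s f0 * estar f0 ^ 2 := by
      have := hs f0; positivity
    linarith
  set σ : ℝ := Real.sqrt q with hσdef
  have hσpos : 0 < σ := Real.sqrt_pos.2 hqpos
  have hσ2 : σ ^ 2 = q := Real.sq_sqrt hqpos.le
  -- scaling lemmas
  have hscaleQ : ∀ (t : ℝ), 0 ≤ t → ∀ e : Fin d → ℝ,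
      Real.sqrt (∑ f, s f * (t * e f) ^ 2) = t * Real.sqrt (∑ f, s f * e f ^ 2) := by
    intro t ht e
    have h1 : (∑ f, s f * (t * e f) ^ 2) = t ^ 2 * ∑ f, s f * e f ^ 2 := by
      rw [Finset.mul_sum]; exact Finset.sum_congr rfl fun f _ => by ring
    rw [h1, Real.sqrt_mul (sq_nonneg t), Real.sqrt_sq ht]
  have hscaleN : ∀ (t : ℝ), 0 ≤ t → ∀ e : Fin d → ℝ,
      Real.sqrt (∑ f, (t * e f) ^ 2) = t * Real.sqrt (∑ f, e f ^ 2) := by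
    intro t ht e
    have h1 : (∑ f, (t * e f) ^ 2) = t ^ 2 * ∑ f, e f ^ 2 := by
      rw [Finset.mul_sum]; exact Finset.sum_congr rfl fun f _ => by ring
    rw [h1, Real.sqrt_mul (sq_nonneg t), Real.sqrt_sq ht]
  -- Lemma A: everything in the ball has constraint value ≤ α
  have hA : ∀ e : Fin d → ℝ, (∑ f, e f ^ 2) ≤ r2 →
      ∑ f, μ f * e f + p * Real.sqrt (∑ f, s f * e f ^ 2) ≤ α := by
    intro e he
    by_contra hlt
    push_neg at hlt
    set G := ∑ f, μ f * e f + p * Real.sqrt (∑ f, s f * e f ^ 2) with hGdef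
    have hGpos : 0 < G := lt_trans hα hlt
    set t := α / G with htdef
    have ht0 : 0 < t := div_pos hα hGpos
    have ht1 : t < 1 := (div_lt_one hGpos).2 hlt
    have hfeas' : α ≤ ∑ f, μ f * (t * e f)
        + p * Real.sqrt (∑ f, s f * (t * e f) ^ 2) := by
      rw [hscaleQ t ht0.le e]
      have hsum : ∑ f, μ f * (t * e f) = t * ∑ f, μ f * e f := by
        rw [Finset.mul_sum]; exact Finset.sum_congr rfl fun f _ => by ring
      rw [hsum]
      have htG : t * G = α := by rw [htdef]; field_simp
      calc α = t * G := htG.symm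
        _ = t * (∑ f, μ f * e f) + t * (p * Real.sqrt (∑ f, s f * e f ^ 2)) := by
            rw [hGdef]; ring
        _ ≤ _ := by rw [mul_left_comm]
    have hle := hopt _ hfeas'
    rw [hscaleN t ht0.le e] at hle
    have h1 : Real.sqrt (∑ f, e f ^ 2) ≤ Real.sqrt r2 := Real.sqrt_le_sqrt he
    have hsr : 0 < Real.sqrt r2 := Real.sqrt_pos.2 hr2pos
    have h2 : t * Real.sqrt (∑ f, e f ^ 2) ≤ t * Real.sqrt r2 :=
      mul_le_mul_of_nonneg_left h1 ht0.le
    have h3 : t * Real.sqrt r2 < Real.sqrt r2 := by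
      linarith only [mul_lt_mul_of_pos_right ht1 hsr]
    linarith only [hle, h2, h3]
  -- the constraint is active
  have hup : (∑ f, μ f * estar f) + p * σ ≤ α := by
    have h1 := hA estar hr2def.ge
    rwa [← hqdef, ← hσdef] at h1
  have hact : (∑ f, μ f * estar f) + p * σ = α := le_antisymm hup hfeas
  set Mx := ∑ f, μ f * estar f with hMxdef
  -- key perturbation inequality
  have key : ∀ u : Fin d → ℝ, (∑ f, estar f * u f) = 0 → (∑ f, u f ^ 2) = r2 →
      (∑ f, μ f * u f) + (p / σ) * (∑ f, s f * estar f * u f) ≤ 0 := by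
    intro u horth hnorm
    set Mu := ∑ f, μ f * u f with hMudef
    set B := ∑ f, s f * estar f * u f with hBdef
    set Qu := ∑ f, s f * u f ^ 2 with hQudef
    set P1 := p * B / σ with hP1def
    set P2 := p * (Qu - q) / (2 * σ) with hP2def
    set C := |Mx| + |P1| + |P2| with hCdef
    have hP1B : P1 = (p / σ) * B := by rw [hP1def]; ring
    have hgoal : Mu + P1 ≤ 0 → Mu + (p / σ) * B ≤ 0 := by
      intro h; linarith [hP1B ▸ h]
    apply hgoal
    apply le_zero_of_forall' _ C (by rw [hCdef]; positivity)
    intro t ht0 ht1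
    set β := Real.sqrt (1 - t ^ 2) with hβdef
    have ht2 : 0 ≤ 1 - t ^ 2 := by
      linarith only [mul_lt_mul_of_pos_left ht1 ht0, ht1, ht0]
    have hβ2 : β ^ 2 = 1 - t ^ 2 := Real.sq_sqrt ht2
    have hβ0 : 0 ≤ β := Real.sqrt_nonneg _
    have hβ1 : β ≤ 1 := by
      linarith only [sq_nonneg (1 - β), hβ2, sq_nonneg t]
    have h1mβ : 1 - β ≤ t ^ 2 := by
      linarith only [mul_nonneg hβ0 (sub_nonneg.2 hβ1), hβ2]
    have hβ01 : 0 ≤ 1 - β := by linarith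
    -- the perturbed point
    set e : Fin d → ℝ := fun f => β * estar f + t * u f with hedef
    have hnorm_e : ∑ f, e f ^ 2 = r2 := by
      have hexp : ∑ f, e f ^ 2
          = β ^ 2 * (∑ f, estar f ^ 2) + 2 * β * t * (∑ f, estar f * u f)
            + t ^ 2 * (∑ f, u f ^ 2) := by
        rw [Finset.mul_sum, Finset.mul_sum, Finset.mul_sum,
          ← Finset.sum_add_distrib, ← Finset.sum_add_distrib]
        exact Finset.sum_congr rfl fun f _ => by simp only [hedef]; ring
      rw [hexp, horth, hnorm, ← hr2def]
      linear_combination r2 * hβ2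
    have hQ_e : ∑ f, s f * e f ^ 2 = q + (2 * β * t * B + t ^ 2 * (Qu - q)) := by
      have hexp : ∑ f, s f * e f ^ 2
          = β ^ 2 * (∑ f, s f * estar f ^ 2) + 2 * β * t * (∑ f, s f * estar f * u f)
            + t ^ 2 * (∑ f, s f * u f ^ 2) := by
        rw [Finset.mul_sum, Finset.mul_sum, Finset.mul_sum,
          ← Finset.sum_add_distrib, ← Finset.sum_add_distrib]
        exact Finset.sum_congr rfl fun f _ => by simp only [hedef]; ring
      rw [hexp, ← hBdef, ← hQudef, ← hqdef]
      linear_combination q * hβ2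
    have hMe : ∑ f, μ f * e f = β * Mx + t * Mu := by
      have hexp : ∑ f, μ f * e f
          = β * (∑ f, μ f * estar f) + t * (∑ f, μ f * u f) := by
        rw [Finset.mul_sum, Finset.mul_sum, ← Finset.sum_add_distrib]
        exact Finset.sum_congr rfl fun f _ => by simp only [hedef]; ring
      rw [hexp, ← hMxdef, ← hMudef]
    have hfe := hA e (le_of_eq hnorm_e)
    rw [hMe, hQ_e] at hfe
    have hQnn : 0 ≤ q + (2 * β * t * B + t ^ 2 * (Qu - q)) := by
      rw [← hQ_e]
      exact Finset.sum_nonneg fun f _ => mul_nonneg (hs f).le (sq_nonneg _)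
    have hsqrt := sqrt_add_le' q (2 * β * t * B + t ^ 2 * (Qu - q)) hqpos hQnn
    rw [← hσdef] at hsqrt
    have hple : p * (σ + (2 * β * t * B + t ^ 2 * (Qu - q)) / (2 * σ))
        ≤ p * Real.sqrt (q + (2 * β * t * B + t ^ 2 * (Qu - q))) := by
      linarith only [mul_nonneg (sub_nonneg.2 hsqrt) (neg_nonneg.2 hp.le)]
    have heq2 : p * (σ + (2 * β * t * B + t ^ 2 * (Qu - q)) / (2 * σ))
        = p * σ + β * t * P1 + t ^ 2 * P2 := by
      rw [hP1def, hP2def]; field_simp; ring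
    have E : t * Mu + β * t * P1 + t ^ 2 * P2 ≤ (1 - β) * Mx := by
      have h1 : β * Mx + t * Mu + (p * σ + β * t * P1 + t ^ 2 * P2) ≤ α := by
        rw [← heq2]; linarith
      have h2 : Mx + p * σ = α := hact
      linarith only [h1, h2]
    -- bound the error terms
    have step1 : (1 - β) * Mx ≤ t ^ 2 * |Mx| := by
      linarith only [mul_nonneg hβ01 (sub_nonneg.2 (le_abs_self Mx)),
        mul_nonneg (sub_nonneg.2 h1mβ) (abs_nonneg Mx)]
    have step2 : (1 - β) * (t * P1) ≤ t ^ 2 * |P1| := by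
      have e1 : t * P1 ≤ t * |P1| := mul_le_mul_of_nonneg_left (le_abs_self P1) ht0.le
      have e2 : (1 - β) * (t * P1) ≤ (1 - β) * (t * |P1|) :=
        mul_le_mul_of_nonneg_left e1 hβ01
      have e3 : (1 - β) * (t * |P1|) ≤ t ^ 2 * |P1| := by
        have e4 : (1 - β) * t ≤ t ^ 2 := by
          linarith only [mul_le_mul_of_nonneg_right h1mβ ht0.le,
            mul_nonneg (sq_nonneg t) (by linarith only [ht1] : (0:ℝ) ≤ 1 - t)]
        linarith only [mul_le_mul_of_nonneg_right e4 (abs_nonneg P1)]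
      linarith
    have step3 : -(t ^ 2 * P2) ≤ t ^ 2 * |P2| := by
      linarith only [mul_le_mul_of_nonneg_left (neg_le_abs P2) (sq_nonneg t)]
    have hta : t * (Mu + P1) ≤ t ^ 2 * C := by
      rw [hCdef]; linarith only [E, step1, step2, step3]
    have hfin := (mul_le_mul_iff_right₀ ht0).1
      (by linarith only [hta] : t * (Mu + P1) ≤ t * (t * C))
    linarith
  -- extend to all orthogonal u by scaling, and to equality by ±
  have key2 : ∀ u : Fin d → ℝ, (∑ f, estar f * u f) = 0 →
      (∑ f, μ f * u f) + (p / σ) * (∑ f, s f * estar f * u f) = 0 := by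
    intro u horth
    by_cases hu0 : ∀ f, u f = 0
    · simp [hu0]
    · push_neg at hu0
      obtain ⟨f0, hf0⟩ := hu0
      have hnu : 0 < ∑ f, u f ^ 2 := by
        have h1 : u f0 ^ 2 ≤ ∑ f, u f ^ 2 :=
          Finset.single_le_sum (f := fun g => u g ^ 2) (fun g _ => sq_nonneg _)
            (Finset.mem_univ f0)
        have h2 : 0 < u f0 ^ 2 := by positivity
        linarith
      set k := Real.sqrt r2 / Real.sqrt (∑ f, u f ^ 2) with hkdef
      have hk0 : 0 < k := div_pos (Real.sqrt_pos.2 hr2pos) (Real.sqrt_pos.2 hnu)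
      have hk2 : k ^ 2 * (∑ f, u f ^ 2) = r2 := by
        rw [hkdef, div_pow, Real.sq_sqrt hr2pos.le, Real.sq_sqrt hnu.le]
        field_simp
      have hlin : ∀ c : ℝ, (∑ f, μ f * (c * u f)) = c * (∑ f, μ f * u f)
          ∧ (∑ f, s f * estar f * (c * u f)) = c * (∑ f, s f * estar f * u f)
          ∧ (∑ f, estar f * (c * u f)) = c * (∑ f, estar f * u f)
          ∧ (∑ f, (c * u f) ^ 2) = c ^ 2 * (∑ f, u f ^ 2) := by
        intro c
        refine ⟨?_, ?_, ?_, ?_⟩ <;>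
          · rw [Finset.mul_sum]; exact Finset.sum_congr rfl fun f _ => by ring
      have h1 := key (fun f => k * u f)
        (by rw [(hlin k).2.2.1, horth, mul_zero])
        (by rw [(hlin k).2.2.2, hk2])
      rw [(hlin k).1, (hlin k).2.1] at h1
      have h2 := key (fun f => (-k) * u f)
        (by rw [(hlin (-k)).2.2.1, horth, mul_zero])
        (by rw [(hlin (-k)).2.2.2, neg_sq, hk2])
      rw [(hlin (-k)).1, (hlin (-k)).2.1] at h2
      have hW : k * ((∑ f, μ f * u f) + (p / σ) * (∑ f, s f * estar f * u f)) ≤ 0 := by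
        linarith only [h1]
      have hW2 : 0 ≤ k * ((∑ f, μ f * u f) + (p / σ) * (∑ f, s f * estar f * u f)) := by
        linarith only [h2]
      have heq0 := le_antisymm hW hW2
      exact (mul_eq_zero.1 heq0).resolve_left (ne_of_gt hk0)
  -- define w and show w = (α/r2) • estar
  set w : Fin d → ℝ := fun f => μ f + (p / σ) * (s f * estar f) with hwdef
  have hwe : ∑ f, w f * estar f = α := by
    have hexp : ∑ f, w f * estar f
        = (∑ f, μ f * estar f) + (p / σ) * (∑ f, s f * estar f ^ 2) := by
      rw [Finset.mul_sum, ← Finset.sum_add_distrib]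
      exact Finset.sum_congr rfl fun f _ => by simp only [hwdef]; ring
    rw [hexp, ← hqdef, ← hMxdef]
    have hpq : (p / σ) * q = p * σ := by
      rw [← hσ2]; field_simp
    rw [hpq]; exact hact
  set u : Fin d → ℝ := fun f => w f - (α / r2) * estar f with hudef
  have horth : ∑ f, estar f * u f = 0 := by
    have hexp : ∑ f, estar f * u f
        = (∑ f, w f * estar f) - (α / r2) * (∑ f, estar f ^ 2) := by
      rw [Finset.mul_sum, ← Finset.sum_sub_distrib]
      exact Finset.sum_congr rfl fun f _ => by simp only [hudef]; ring
    rw [hexp, hwe, ← hr2def]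
    field_simp
    ring
  have hwu := key2 u horth
  have hwu' : ∑ f, w f * u f = 0 := by
    have hexp : ∑ f, w f * u f
        = (∑ f, μ f * u f) + (p / σ) * (∑ f, s f * estar f * u f) := by
      rw [Finset.mul_sum, ← Finset.sum_add_distrib]
      exact Finset.sum_congr rfl fun f _ => by simp only [hwdef]; ring
    rw [hexp, hwu]
  have hu0 : ∀ f, u f = 0 := by
    have husq : ∑ f, u f ^ 2 = 0 := by
      have hexp : ∑ f, u f ^ 2
          = (∑ f, w f * u f) - (α / r2) * (∑ f, estar f * u f) := by
        rw [Finset.mul_sum, ← Finset.sum_sub_distrib]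
        exact Finset.sum_congr rfl fun f _ => by simp only [hudef]; ring
      rw [hexp, hwu', horth]; ring
    intro f
    have h0 := (Finset.sum_eq_zero_iff_of_nonneg (fun g _ => sq_nonneg (u g))).1
      husq f (Finset.mem_univ f)
    exact sq_eq_zero_iff.1 h0
  -- conclude
  refine ⟨1, α / r2, -p / σ, one_pos, div_pos hα hr2pos,
    div_pos (by linarith) hσpos, ?_, ?_, ?_⟩
  · intro f
    have hf := hu0 f
    simp only [hudef, hwdef] at hf
    have hD : 0 < α / r2 + -p / σ * s f := by
      have h1 : 0 < α / r2 := div_pos hα hr2pos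
      have h2 : 0 < -p / σ * s f := mul_pos (div_pos (by linarith) hσpos) (hs f)
      linarith
    rw [one_mul, eq_div_iff (ne_of_gt hD)]
    linear_combination -hf
  · intro f m₁ m₂ hm
    have hD : 0 < α / r2 + -p / σ * s f := by
      have h1 : 0 < α / r2 := div_pos hα hr2pos
      have h2 : 0 < -p / σ * s f := mul_pos (div_pos (by linarith) hσpos) (hs f)
      linarith
    rw [one_mul, one_mul]
    exact (div_lt_div_iff_of_pos_right hD).2 hm
  · intro f s₁ s₂ hs₁ hs₂ hμ
    have h1 : 0 < α / r2 := div_pos hα hr2pos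
    have h2 : 0 < -p / σ := div_pos (by linarith) hσpos
    have hD1 : 0 < α / r2 + -p / σ * s₁ := by positivity
    have hD12 : α / r2 + -p / σ * s₁ < α / r2 + -p / σ * s₂ := by
      linarith only [mul_pos h2 (sub_pos.2 hs₂)]
    have hnum : 0 < 1 * μ f := by linarith
    exact div_lt_div_of_pos_left hnum hD1 hD12
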